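/- Let F(t) = e^{t/2} · Σ_{n∈ℤ} e^{−πn²e^{2t}} for t ∈ ℝ. Then F is twice differentiable on ℝ and for every real t, Φ(t) = (1/2)·(F''(t) − (1/4)·F(t)). -/

import Mathlib

/-- Polya's function `Φ(t) = ∑_{n≥1} (4π²n⁴e^{9t/2} − 6πn²e^{5t/2}) e^{−πn²e^{2t}}`. -/
noncomputable def Phi (t : ℝ) : ℝ :=
  ∑' n : ℕ,
    (4 * Real.pi ^ 2 * ((n : ℝ) + 1) ^ 4 * Real.exp (9 * t / 2)
      - 6 * Real.pi * ((n : ℝ) + 1) ^ 2 * Real.exp (5 * t / 2))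
    * Real.exp (-Real.pi * ((n : ℝ) + 1) ^ 2 * Real.exp (2 * t))

/-- `F(t) = e^{t/2} θ(e^{2t})` where `θ` is Jacobi's theta function. -/
noncomputable def Fθ (t : ℝ) : ℝ :=
  Real.exp (t / 2) * ∑' n : ℤ, Real.exp (-Real.pi * (n : ℝ) ^ 2 * Real.exp (2 * t))


section PolyaHelpers
open Real

noncomputable def g0 (n : ℤ) (t : ℝ) : ℝ := Real.exp (-Real.pi * (n:ℝ)^2 * Real.exp (2*t))
noncomputable def g1 (n : ℤ) (t : ℝ) : ℝ := (-2*Real.pi*(n:ℝ)^2*Real.exp (2*t)) * g0 n t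
noncomputable def g2 (n : ℤ) (t : ℝ) : ℝ :=
  (4*Real.pi^2*(n:ℝ)^4*Real.exp (2*t)^2 - 4*Real.pi*(n:ℝ)^2*Real.exp (2*t)) * g0 n t

lemma summable_nat_aux (k : ℕ) {v : ℝ} (hv : 0 < v) :
    Summable (fun n : ℕ => ((n:ℝ)^2)^k * Real.exp (-Real.pi * (n:ℝ)^2 * v)) := by
  have hr : ‖Real.exp (-Real.pi * v)‖ < 1 := by
    rw [Real.norm_eq_abs, abs_of_pos (Real.exp_pos _), Real.exp_lt_one_iff]
    nlinarith [Real.pi_pos]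
  have := summable_pow_mul_geometric_of_norm_lt_one (R := ℝ) (2*k) hr
  apply this.of_nonneg_of_le
  · intro n
    positivity
  · intro n
    have h1 : ((n:ℝ)^2)^k = (n:ℝ)^(2*k) := by rw [← pow_mul, mul_comm]
    rw [h1]
    apply mul_le_mul_of_nonneg_left _ (by positivity)
    have : Real.exp (-Real.pi * (n:ℝ)^2 * v) = Real.exp (-Real.pi * v) ^ (n^2) := by
      rw [← Real.exp_nat_mul]; push_cast; ring_nf
    rw [this]
    calc Real.exp (-Real.pi * v) ^ (n^2) ≤ Real.exp (-Real.pi * v) ^ n := by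
          apply pow_le_pow_of_le_one (Real.exp_pos _).le ?_ (Nat.le_self_pow two_ne_zero n)
          rw [Real.exp_le_one_iff]; nlinarith [Real.pi_pos]
      _ = Real.exp (-Real.pi * v) ^ n := rfl

lemma summable_int_aux (k : ℕ) {v : ℝ} (hv : 0 < v) :
    Summable (fun n : ℤ => ((n:ℝ)^2)^k * Real.exp (-Real.pi * (n:ℝ)^2 * v)) := by
  apply Summable.of_nat_of_neg_add_one
  · exact_mod_cast summable_nat_aux k hv
  · have := summable_nat_aux k hv
    apply ((summable_nat_add_iff 1).mpr this).congr
    intro n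
    push_cast
    ring_nf

lemma g0_summable {t : ℝ} : Summable (fun n : ℤ => g0 n t) := by
  have := summable_int_aux 0 (Real.exp_pos (2*t))
  simpa [g0] using this

lemma g1_summable {t : ℝ} : Summable (fun n : ℤ => g1 n t) := by
  have := (summable_int_aux 1 (Real.exp_pos (2*t))).mul_left (-2*Real.pi*Real.exp (2*t))
  apply this.congr
  intro n
  simp only [g1, g0, pow_one]
  ring

lemma g2_summable {t : ℝ} : Summable (fun n : ℤ => g2 n t) := by
  have h2 := (summable_int_aux 2 (Real.exp_pos (2*t))).mul_left (4*Real.pi^2*Real.exp (2*t)^2)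
  have h1 := (summable_int_aux 1 (Real.exp_pos (2*t))).mul_left (4*Real.pi*Real.exp (2*t))
  apply (h2.sub h1).congr
  intro n
  simp only [g2, g0, pow_one]
  ring

lemma hasDerivAt_g0 (n : ℤ) (t : ℝ) : HasDerivAt (g0 n) (g1 n t) t := by
  have h : HasDerivAt (fun t : ℝ => -Real.pi * (n:ℝ)^2 * Real.exp (2*t))
      (-Real.pi * (n:ℝ)^2 * (Real.exp (2*t) * 2)) t := by
    have := (((hasDerivAt_id t).const_mul 2).exp).const_mul (-Real.pi * (n:ℝ)^2)
    simpa using this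
  have := h.exp
  refine this.congr_deriv ?_
  simp only [g1, g0]
  ring

lemma hasDerivAt_g1 (n : ℤ) (t : ℝ) : HasDerivAt (g1 n) (g2 n t) t := by
  have hp : HasDerivAt (fun t : ℝ => -2*Real.pi*(n:ℝ)^2*Real.exp (2*t))
      (-2*Real.pi*(n:ℝ)^2*(Real.exp (2*t)*2)) t := by
    have := (((hasDerivAt_id t).const_mul 2).exp).const_mul (-2*Real.pi*(n:ℝ)^2)
    simpa [mul_comm, mul_assoc, mul_left_comm] using this
  have := hp.mul (hasDerivAt_g0 n t)
  refine this.congr_deriv ?_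
  simp only [g2, g1, g0]
  ring

noncomputable def T0 (t : ℝ) : ℝ := ∑' n : ℤ, g0 n t
noncomputable def T1 (t : ℝ) : ℝ := ∑' n : ℤ, g1 n t
noncomputable def T2 (t : ℝ) : ℝ := ∑' n : ℤ, g2 n t

lemma exp2_bounds {t₀ x : ℝ} (hx : x ∈ Set.Ioo (t₀-1) (t₀+1)) :
    Real.exp (2*(t₀-1)) ≤ Real.exp (2*x) ∧ Real.exp (2*x) ≤ Real.exp (2*(t₀+1)) :=
  ⟨Real.exp_le_exp.mpr (by linarith [hx.1]), Real.exp_le_exp.mpr (by linarith [hx.2])⟩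

lemma g0_le {t₀ x : ℝ} (hx : x ∈ Set.Ioo (t₀-1) (t₀+1)) (n : ℤ) :
    g0 n x ≤ Real.exp (-Real.pi * (n:ℝ)^2 * Real.exp (2*(t₀-1))) := by
  apply Real.exp_le_exp.mpr
  have h := (exp2_bounds hx).1
  nlinarith [mul_le_mul_of_nonneg_left h (show (0:ℝ) ≤ Real.pi*(n:ℝ)^2 by positivity)]

lemma hasDerivAt_T0 (t₀ : ℝ) : HasDerivAt T0 (T1 t₀) t₀ := by
  set a := Real.exp (2*(t₀-1)) with ha_def
  set b := Real.exp (2*(t₀+1)) with hb_def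
  have ha : 0 < a := Real.exp_pos _
  refine hasDerivAt_tsum_of_isPreconnected
    (u := fun n : ℤ => (2*Real.pi*b) * ((n:ℝ)^2 * Real.exp (-Real.pi * (n:ℝ)^2 * a)))
    (y₀ := t₀) (t := Set.Ioo (t₀-1) (t₀+1))
    ?_ isOpen_Ioo (isPreconnected_Ioo) (fun n y _ => hasDerivAt_g0 n y) ?_ ?_ ?_ ?_
  · have := (summable_int_aux 1 ha).mul_left (2*Real.pi*b)
    simpa [pow_one] using this
  · intro n y hy
    have h0 : (0:ℝ) < g0 n y := Real.exp_pos _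
    have hb := (exp2_bounds hy).2
    have hg := g0_le hy n
    rw [Real.norm_eq_abs, g1, abs_mul]
    have h1 : |(-2*Real.pi*(n:ℝ)^2*Real.exp (2*y))| = 2*Real.pi*(n:ℝ)^2*Real.exp (2*y) := by
      have hnn : 0 ≤ 2*Real.pi*(n:ℝ)^2*Real.exp (2*y) := by positivity
      rw [abs_of_nonpos (by linarith)]
      ring
    rw [h1, abs_of_pos h0]
    have key : 2*Real.pi*(n:ℝ)^2*Real.exp (2*y) ≤ 2*Real.pi*(n:ℝ)^2*b := by
      nlinarith [mul_le_mul_of_nonneg_left hb (show (0:ℝ) ≤ 2*Real.pi*(n:ℝ)^2 by positivity)]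
    calc 2*Real.pi*(n:ℝ)^2*Real.exp (2*y) * g0 n y
        ≤ 2*Real.pi*(n:ℝ)^2*b * Real.exp (-Real.pi * (n:ℝ)^2 * a) := by
          apply mul_le_mul key hg h0.le (by positivity)
      _ = (2*Real.pi*b) * ((n:ℝ)^2 * Real.exp (-Real.pi * (n:ℝ)^2 * a)) := by ring
  · exact Set.mem_Ioo.mpr ⟨by linarith, by linarith⟩
  · exact g0_summable
  · exact Set.mem_Ioo.mpr ⟨by linarith, by linarith⟩

lemma hasDerivAt_T1 (t₀ : ℝ) : HasDerivAt T1 (T2 t₀) t₀ := by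
  set a := Real.exp (2*(t₀-1)) with ha_def
  set b := Real.exp (2*(t₀+1)) with hb_def
  have ha : 0 < a := Real.exp_pos _
  have hb0 : 0 < b := Real.exp_pos _
  refine hasDerivAt_tsum_of_isPreconnected
    (u := fun n : ℤ => (4*Real.pi^2*((n:ℝ)^2)^2*b^2 + 4*Real.pi*(n:ℝ)^2*b)
      * Real.exp (-Real.pi * (n:ℝ)^2 * a))
    (y₀ := t₀) (t := Set.Ioo (t₀-1) (t₀+1))
    ?_ isOpen_Ioo (isPreconnected_Ioo) (fun n y _ => hasDerivAt_g1 n y) ?_ ?_ ?_ ?_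
  · have h2 := (summable_int_aux 2 ha).mul_left (4*Real.pi^2*b^2)
    have h1 := (summable_int_aux 1 ha).mul_left (4*Real.pi*b)
    apply (h2.add h1).congr
    intro n
    simp only [pow_one]
    ring
  · intro n y hy
    have h0 : (0:ℝ) < g0 n y := Real.exp_pos _
    have hEb := (exp2_bounds hy).2
    have hg := g0_le hy n
    have hE : 0 < Real.exp (2*y) := Real.exp_pos _
    rw [Real.norm_eq_abs, g2, abs_mul, abs_of_pos h0]
    have habs : |4*Real.pi^2*(n:ℝ)^4*Real.exp (2*y)^2 - 4*Real.pi*(n:ℝ)^2*Real.exp (2*y)|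
        ≤ 4*Real.pi^2*((n:ℝ)^2)^2*b^2 + 4*Real.pi*(n:ℝ)^2*b := by
      have h1 : 4*Real.pi^2*(n:ℝ)^4*Real.exp (2*y)^2 ≤ 4*Real.pi^2*((n:ℝ)^2)^2*b^2 := by
        have : Real.exp (2*y)^2 ≤ b^2 := by nlinarith
        nlinarith [mul_le_mul_of_nonneg_left this
          (show (0:ℝ) ≤ 4*Real.pi^2*(n:ℝ)^4 by positivity), sq_nonneg ((n:ℝ))]
      have h2 : 4*Real.pi*(n:ℝ)^2*Real.exp (2*y) ≤ 4*Real.pi*(n:ℝ)^2*b := by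
        nlinarith [mul_le_mul_of_nonneg_left hEb (show (0:ℝ) ≤ 4*Real.pi*(n:ℝ)^2 by positivity)]
      have hA : (0:ℝ) ≤ 4*Real.pi^2*(n:ℝ)^4*Real.exp (2*y)^2 := by positivity
      have hB : (0:ℝ) ≤ 4*Real.pi*(n:ℝ)^2*Real.exp (2*y) := by positivity
      have hP1 : (0:ℝ) ≤ 4*Real.pi^2*((n:ℝ)^2)^2*b^2 := by positivity
      have hP2 : (0:ℝ) ≤ 4*Real.pi*(n:ℝ)^2*b := by positivity
      rw [abs_sub_le_iff]
      exact ⟨by linarith, by linarith⟩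
    calc |4*Real.pi^2*(n:ℝ)^4*Real.exp (2*y)^2 - 4*Real.pi*(n:ℝ)^2*Real.exp (2*y)| * g0 n y
        ≤ (4*Real.pi^2*((n:ℝ)^2)^2*b^2 + 4*Real.pi*(n:ℝ)^2*b)
            * Real.exp (-Real.pi * (n:ℝ)^2 * a) := by
          apply mul_le_mul habs hg h0.le (by positivity)
      _ = _ := rfl
  · exact Set.mem_Ioo.mpr ⟨by linarith, by linarith⟩
  · exact g1_summable
  · exact Set.mem_Ioo.mpr ⟨by linarith, by linarith⟩

end PolyaHelpers

/-- `F` is twice differentiable and `Φ(t) = (1/2)(F''(t) − F(t)/4)`. -/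
theorem Phi_eq_theta_combination :
    ∃ F' F'' : ℝ → ℝ,
      (∀ t : ℝ, HasDerivAt Fθ (F' t) t) ∧
      (∀ t : ℝ, HasDerivAt F' (F'' t) t) ∧
      (∀ t : ℝ, Phi t = (1 / 2) * (F'' t - (1 / 4) * Fθ t)) := by
  have hFθ : Fθ = fun t => Real.exp (t/2) * T0 t := rfl
  refine ⟨fun t => Real.exp (t/2) * ((1/2) * T0 t + T1 t),
          fun t => Real.exp (t/2) * ((1/4) * T0 t + T1 t + T2 t), ?_, ?_, ?_⟩
  · intro t
    rw [hFθ]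
    have hexp : HasDerivAt (fun t : ℝ => Real.exp (t/2)) (Real.exp (t/2) * (1/2)) t := by
      simpa using ((hasDerivAt_id t).div_const 2).exp
    have := hexp.mul (hasDerivAt_T0 t)
    refine this.congr_deriv (by beta_reduce; ring)
  · intro t
    have hexp : HasDerivAt (fun t : ℝ => Real.exp (t/2)) (Real.exp (t/2) * (1/2)) t := by
      simpa using ((hasDerivAt_id t).div_const 2).exp
    have hin : HasDerivAt (fun t => (1/2) * T0 t + T1 t) ((1/2) * T1 t + T2 t) t :=
      ((hasDerivAt_T0 t).const_mul (1/2)).add (hasDerivAt_T1 t)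
    have := hexp.mul hin
    refine this.congr_deriv (by beta_reduce; ring)
  · intro t
    set G : ℤ → ℝ := fun n =>
      (4*Real.pi^2*(n:ℝ)^4*Real.exp (2*t)^2 - 6*Real.pi*(n:ℝ)^2*Real.exp (2*t)) * g0 n t with hG_def
    have hGsum : Summable G := by
      apply (g1_summable.add g2_summable).congr
      intro n
      simp only [hG_def, g1, g2]
      ring
    have hadd : T1 t + T2 t = ∑' n : ℤ, G n := by
      rw [T1, T2, ← Summable.tsum_add g1_summable g2_summable]
      apply tsum_congr
      intro n
      simp only [hG_def, g1, g2]
      ring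
    have hGnat : Summable (fun n : ℕ => G n) := hGsum.comp_injective (fun a b h => by exact_mod_cast h)
    have hGneg : Summable (fun n : ℕ => G (-((n:ℤ) + 1))) :=
      hGsum.comp_injective (fun a b h => by omega)
    have hsplit : ∑' n : ℤ, G n = (∑' n : ℕ, G n) + ∑' n : ℕ, G (-((n:ℤ)+1)) :=
      tsum_of_nat_of_neg_add_one hGnat hGneg
    have hzero : G 0 = 0 := by simp [hG_def]
    have hnat : ∑' n : ℕ, G n = ∑' n : ℕ, G ((n:ℤ)+1) := by
      rw [Summable.tsum_eq_zero_add hGnat]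
      simp only [Nat.cast_zero, hzero, zero_add]
      apply tsum_congr
      intro n
      push_cast
      rfl
    have hnegeq : ∀ n : ℕ, G (-((n:ℤ)+1)) = G ((n:ℤ)+1) := by
      intro n
      simp only [hG_def, g0]
      push_cast
      ring_nf
    have hEq : ∑' n : ℤ, G n = 2 * ∑' n : ℕ, G ((n:ℤ)+1) := by
      rw [hsplit, hnat, tsum_congr hnegeq]
      ring
    have hE1 : Real.exp (t/2) * Real.exp (2*t)^2 = Real.exp (9*t/2) := by
      rw [sq, ← Real.exp_add, ← Real.exp_add]
      ring_nf
    have hE2 : Real.exp (t/2) * Real.exp (2*t) = Real.exp (5*t/2) := by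
      rw [← Real.exp_add]
      ring_nf
    have key : Phi t = Real.exp (t/2) * ∑' n : ℕ, G ((n:ℤ)+1) := by
      rw [← tsum_mul_left]
      apply tsum_congr
      intro n
      simp only [hG_def, g0]
      push_cast
      rw [show Real.exp (t/2) * ((4*Real.pi^2*((n:ℝ)+1)^4*Real.exp (2*t)^2
            - 6*Real.pi*((n:ℝ)+1)^2*Real.exp (2*t))
          * Real.exp (-Real.pi * ((n:ℝ)+1)^2 * Real.exp (2*t)))
        = (4*Real.pi^2*((n:ℝ)+1)^4*(Real.exp (t/2) * Real.exp (2*t)^2)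
            - 6*Real.pi*((n:ℝ)+1)^2*(Real.exp (t/2) * Real.exp (2*t)))
          * Real.exp (-Real.pi * ((n:ℝ)+1)^2 * Real.exp (2*t)) from by ring,
        hE1, hE2]
    rw [key, hFθ]
    simp only
    rw [show (1:ℝ)/2 * (Real.exp (t/2) * ((1/4) * T0 t + T1 t + T2 t)
        - (1/4) * (Real.exp (t/2) * T0 t)) = (1/2) * Real.exp (t/2) * (T1 t + T2 t) from by ring,
      hadd, hEq]
    ring
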